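/- arXiv:0907.1064 — 4 statements merged into one kernel-verified Lean document; each statement's English description precedes it below -/
import Mathlib

section
/- Jacobian of congruence transformation on symmetric matrices: if Y = A X Aᵀ + C where X, Y are m×m real symmetric matrices, A is an invertible m×m real matrix, and C is a fixed symmetric matrix, then (dY) = |det A|^{m+1} (dX). -/
open Matrix

noncomputable section

/-- The subspace `Sym(m, ℝ)` of symmetric matrices. -/
def symSubmodule (m : ℕ) : Submodule ℝ (Matrix (Fin m) (Fin m) ℝ) where
  carrier := {X | X.IsSymm}
  add_mem' := fun ha hb => ha.add hb
  zero_mem' := by simp [Matrix.IsSymm]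
  smul_mem' := fun c X hX => Matrix.IsSymm.smul hX c

namespace JacobianCongrAux

variable {m : ℕ}

/-- The congruence map `X ↦ A X Aᵀ` as a linear endomorphism of `Sym(m, ℝ)`. -/
def congrMap (m : ℕ) (A : Matrix (Fin m) (Fin m) ℝ) :
    symSubmodule m →ₗ[ℝ] symSubmodule m where
  toFun X := ⟨A * X.1 * Aᵀ, by
    have hX : (X.1)ᵀ = X.1 := X.2
    show (A * X.1 * Aᵀ)ᵀ = A * X.1 * Aᵀ
    rw [transpose_mul, transpose_mul, transpose_transpose, hX, Matrix.mul_assoc]⟩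
  map_add' X Y := by
    apply Subtype.ext
    simp [Matrix.mul_add, Matrix.add_mul]
  map_smul' c X := by
    apply Subtype.ext
    simp [Matrix.mul_smul, Matrix.smul_mul]

@[simp] lemma congrMap_coe (A : Matrix (Fin m) (Fin m) ℝ) (X : symSubmodule m) :
    ((congrMap m A X : symSubmodule m) : Matrix (Fin m) (Fin m) ℝ) = A * X.1 * Aᵀ := rfl

lemma congrMap_one : congrMap m 1 = LinearMap.id := by
  refine LinearMap.ext fun X => Subtype.ext ?_
  simp

lemma congrMap_mul (A B : Matrix (Fin m) (Fin m) ℝ) :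
    congrMap m (A * B) = (congrMap m A).comp (congrMap m B) := by
  refine LinearMap.ext fun X => Subtype.ext ?_
  simp [transpose_mul, Matrix.mul_assoc]

lemma det_congrMap_mul (A B : Matrix (Fin m) (Fin m) ℝ) :
    LinearMap.det (congrMap m (A * B)) =
      LinearMap.det (congrMap m A) * LinearMap.det (congrMap m B) := by
  rw [congrMap_mul, LinearMap.det_comp]

lemma matrix_det_one_add_of_isNilpotent {n : ℕ} (M : Matrix (Fin n) (Fin n) ℝ)
    (h : IsNilpotent M) : (1 + M).det = 1 := by
  have hchar : M.charpoly = Polynomial.X ^ (Fintype.card (Fin n)) :=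
    sub_eq_zero.mp (Matrix.isNilpotent_charpoly_sub_pow_of_isNilpotent h).eq_zero
  have heval := congrArg (Polynomial.eval (-1 : ℝ)) hchar
  rw [Matrix.charpoly] at heval
  have hmap : (Polynomial.evalRingHom (-1 : ℝ)).mapMatrix (Matrix.charmatrix M) = -(1 + M) := by
    ext i j
    by_cases hij : i = j
    · subst hij
      simp [Matrix.charmatrix_apply_eq]
      ring
    · simp [Matrix.charmatrix_apply_ne _ _ _ hij, Matrix.one_apply_ne hij]
  have h1 : Polynomial.eval (-1 : ℝ) (Matrix.charmatrix M).det
      = ((Polynomial.evalRingHom (-1 : ℝ)).mapMatrix (Matrix.charmatrix M)).det := by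
    rw [← RingHom.map_det]
    rfl
  rw [h1, hmap, Matrix.det_neg] at heval
  simp only [Polynomial.eval_pow, Polynomial.eval_X] at heval
  have hne : ((-1:ℝ)) ^ Fintype.card (Fin n) ≠ 0 := pow_ne_zero _ (by norm_num)
  exact mul_left_cancel₀ hne (heval.trans (mul_one _).symm)

/-- `det (1 + N) = 1` for a nilpotent endomorphism over ℝ. -/
lemma det_one_add_of_isNilpotent {V : Type*} [AddCommGroup V] [Module ℝ V]
    [FiniteDimensional ℝ V] (N : V →ₗ[ℝ] V) (h : IsNilpotent N) :
    LinearMap.det (1 + N) = 1 := by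
  classical
  let b := Module.finBasis ℝ V
  set e := LinearMap.toMatrixAlgEquiv b with he
  have hMnil : IsNilpotent (e N) := h.map e.toRingHom
  have : LinearMap.det (1 + N) = (e (1 + N)).det := by
    rw [he, LinearMap.toMatrixAlgEquiv, ← LinearMap.det_toMatrix b]
    rfl
  rw [this, map_add, _root_.map_one]
  exact matrix_det_one_add_of_isNilpotent _ hMnil

lemma det_congrMap_transvection (i j : Fin m) (hij : i ≠ j) (c : ℝ) :
    LinearMap.det (congrMap m (Matrix.transvection i j c)) = 1 := by
  classical
  set E : Matrix (Fin m) (Fin m) ℝ := Matrix.single i j c with hEdef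
  have hE : E * E = 0 := by
    rw [hEdef, Matrix.single_mul_single_of_ne (c := c) (i := i) (j := j) (k := i) (h := hij.symm) (d := c)]
  have hEt : Eᵀ * Eᵀ = 0 := by
    rw [← transpose_mul, hE, transpose_zero]
  -- the matrix-level "difference" map
  set n : Matrix (Fin m) (Fin m) ℝ → Matrix (Fin m) (Fin m) ℝ :=
    fun X => E * X + X * Eᵀ + E * X * Eᵀ with hn
  have hE' : ∀ Y : Matrix (Fin m) (Fin m) ℝ, E * (E * Y) = 0 := by
    intro Y; rw [← Matrix.mul_assoc, hE, Matrix.zero_mul]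
  have hn3 : ∀ X, n (n (n X)) = 0 := by
    intro X
    simp only [hn]
    simp only [Matrix.mul_add, Matrix.add_mul, Matrix.mul_assoc, hE', hEt,
      Matrix.mul_zero, Matrix.zero_mul, add_zero, zero_add]
  set N : symSubmodule m →ₗ[ℝ] symSubmodule m :=
    congrMap m (Matrix.transvection i j c) - 1 with hN
  have hNval : ∀ X : symSubmodule m, ((N X : symSubmodule m) : Matrix (Fin m) (Fin m) ℝ)
      = n X.1 := by
    intro X
    have : ((N X : symSubmodule m) : Matrix (Fin m) (Fin m) ℝ)
        = Matrix.transvection i j c * X.1 * (Matrix.transvection i j c)ᵀ - X.1 := rfl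
    rw [this, hn]
    simp only [Matrix.transvection, hEdef.symm]
    simp only [Matrix.transpose_add, Matrix.transpose_one]
    have hX : (X.1)ᵀ = X.1 := X.2
    noncomm_ring
  have hNnil : IsNilpotent N := by
    refine ⟨3, ?_⟩
    refine LinearMap.ext fun X => Subtype.ext ?_
    have : ((N ^ 3) X : symSubmodule m).1 = n (n (n X.1)) := by
      have h3 : (N ^ 3) X = N (N (N X)) := by
        rw [pow_succ, pow_succ, pow_one]
        rfl
      rw [h3, hNval, hNval, hNval]
    rw [this, hn3]
    rfl
  have hone : congrMap m (Matrix.transvection i j c) = 1 + N := by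
    rw [hN]; abel
  rw [hone]
  exact det_one_add_of_isNilpotent N hNnil


/-- Index type for the standard basis of symmetric matrices. -/
abbrev SymIdx (m : ℕ) : Type := {p : Fin m × Fin m // p.1 ≤ p.2}

/-- Coordinates of a symmetric matrix. -/
def symEquivFun (m : ℕ) : symSubmodule m ≃ₗ[ℝ] (SymIdx m → ℝ) where
  toFun X p := X.1 p.1.1 p.1.2
  map_add' X Y := rfl
  map_smul' c X := rfl
  invFun f := ⟨Matrix.of fun i j =>
      if h : i ≤ j then f ⟨(i, j), h⟩ else f ⟨(j, i), le_of_not_ge h⟩, by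
    show _ᵀ = _
    ext i j
    simp only [transpose_apply, Matrix.of_apply]
    rcases le_or_gt i j with h | h
    · rcases eq_or_lt_of_le h with rfl | hlt
      · rfl
      · rw [dif_neg (not_le.2 hlt), dif_pos h]
    · rw [dif_pos h.le, dif_neg (not_le.2 h)]⟩
  left_inv X := by
    apply Subtype.ext
    ext i j
    simp only [Matrix.of_apply]
    split_ifs with h
    · rfl
    · exact X.2.apply i j
  right_inv f := by
    funext p
    simp only [Matrix.of_apply, dif_pos p.2]


lemma det_congrMap_diagonal (d : Fin m → ℝ) :
    LinearMap.det (congrMap m (Matrix.diagonal d)) =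
      ∏ p : SymIdx m, d p.1.1 * d p.1.2 := by
  classical
  let b := Module.Basis.ofEquivFun (symEquivFun m)
  rw [← LinearMap.det_toMatrix b]
  have hmat : LinearMap.toMatrix b b (congrMap m (Matrix.diagonal d)) =
      Matrix.diagonal (fun p : SymIdx m => d p.1.1 * d p.1.2) := by
    ext p q
    rw [LinearMap.toMatrix_apply]
    have hrepr : ∀ x : symSubmodule m, b.repr x p = symEquivFun m x p := fun x =>
      Module.Basis.ofEquivFun_repr_apply _ _ _
    rw [hrepr]
    have hbq : (b q : symSubmodule m).1 = (symEquivFun m).symm (Pi.single q 1) := by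
      have := Module.Basis.coe_ofEquivFun (symEquivFun m)
      have h2 : b q = (symEquivFun m).symm (Function.update (0 : SymIdx m → ℝ) q 1) :=
        congrFun this q
      rw [h2]
      congr 1
    show (Matrix.diagonal d * (b q).1 * (Matrix.diagonal d)ᵀ) p.1.1 p.1.2 = _
    rw [Matrix.diagonal_transpose, Matrix.mul_diagonal, Matrix.diagonal_mul, hbq]
    have hentry : ((symEquivFun m).symm (Pi.single q 1) : symSubmodule m).1 p.1.1 p.1.2
        = if p = q then 1 else 0 := by
      show (Matrix.of _ : Matrix (Fin m) (Fin m) ℝ) p.1.1 p.1.2 = _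
      simp only [Matrix.of_apply, dif_pos p.2]
      have : (⟨(p.1.1, p.1.2), p.2⟩ : SymIdx m) = p := rfl
      rw [this, Pi.single_apply]
    rw [hentry]
    rw [Matrix.diagonal_apply]
    split_ifs with h
    · subst h; ring
    · ring
  rw [hmat, Matrix.det_diagonal]


open Finset in
lemma abs_prod_symIdx (d : Fin m → ℝ) :
    |∏ p : SymIdx m, d p.1.1 * d p.1.2| = |∏ i, d i| ^ (m + 1) := by
  classical
  set Q : ℝ := ∏ p ∈ univ.filter (fun p : Fin m × Fin m => p.1 ≤ p.2), d p.1 * d p.2 with hQ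
  have hsub : (∏ p : SymIdx m, d p.1.1 * d p.1.2) = Q := by
    rw [hQ, Finset.prod_subtype (p := fun p : Fin m × Fin m => p.1 ≤ p.2)
      (univ.filter (fun p : Fin m × Fin m => p.1 ≤ p.2))
      (by simp) (fun p : Fin m × Fin m => d p.1 * d p.2)]
  set Q' : ℝ := ∏ p ∈ univ.filter (fun p : Fin m × Fin m => p.2 ≤ p.1), d p.1 * d p.2 with hQ'
  have hswap : Q = Q' := by
    rw [hQ, hQ']
    refine Finset.prod_nbij' (fun p => p.swap) (fun p => p.swap) ?_ ?_ ?_ ?_ ?_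
    · intro a ha; simp only [mem_filter, mem_univ, true_and] at ha ⊢; exact ha
    · intro a ha; simp only [mem_filter, mem_univ, true_and] at ha ⊢; exact ha
    · intro a _; simp
    · intro a _; simp
    · intro a _; simp [mul_comm]
  have hall : (∏ p : Fin m × Fin m, d p.1 * d p.2) = (∏ i, d i) ^ (2 * m) := by
    rw [Finset.prod_mul_distrib]
    rw [Fintype.prod_prod_type (fun p : Fin m × Fin m => d p.1),
        Fintype.prod_prod_type (fun p : Fin m × Fin m => d p.2)]
    simp only [Finset.prod_const, Finset.card_univ, Fintype.card_fin]
    rw [Finset.prod_pow]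
    ring
  have hdiag : (∏ p ∈ univ.filter (fun p : Fin m × Fin m => p.1 = p.2), d p.1 * d p.2)
      = (∏ i, d i) ^ 2 := by
    have : (∏ p ∈ univ.filter (fun p : Fin m × Fin m => p.1 = p.2), d p.1 * d p.2)
        = ∏ i : Fin m, d i * d i := by
      refine Finset.prod_nbij' (fun p => p.1) (fun i => (i, i)) ?_ ?_ ?_ ?_ ?_
      · intro a _; simp
      · intro a ha; simp only [mem_filter, mem_univ, true_and]
      · intro a ha; simp only [mem_filter, mem_univ, true_and] at ha
        exact Prod.ext rfl ha
      · intro a _; rfl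
      · intro a ha; simp only [mem_filter, mem_univ, true_and] at ha
        rw [← ha]
    rw [this, sq, ← Finset.prod_mul_distrib]
  have hsplit : Q' = (∏ p ∈ univ.filter (fun p : Fin m × Fin m => ¬ p.1 ≤ p.2), d p.1 * d p.2)
      * (∏ p ∈ univ.filter (fun p : Fin m × Fin m => p.1 = p.2), d p.1 * d p.2) := by
    rw [hQ']
    rw [← Finset.prod_filter_mul_prod_filter_not
      (univ.filter (fun p : Fin m × Fin m => p.2 ≤ p.1))
      (fun p : Fin m × Fin m => p.1 ≤ p.2), Finset.filter_filter, Finset.filter_filter]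
    rw [mul_comm]
    congr 1
    · refine Finset.prod_congr (Finset.filter_congr ?_) fun _ _ => rfl
      intro p _
      constructor
      · intro h; exact h.2
      · intro h; exact ⟨le_of_not_ge h, h⟩
    · refine Finset.prod_congr (Finset.filter_congr ?_) fun _ _ => rfl
      intro p _
      constructor
      · intro h; exact le_antisymm h.2 h.1
      · intro h; exact ⟨h.ge, h.le⟩
  have hQQ : Q * Q' = ((∏ i, d i) ^ (m + 1)) ^ 2 := by
    rw [hsplit, ← mul_assoc, hQ, Finset.prod_filter_mul_prod_filter_not, hdiag, hall]
    ring
  have hQ2 : Q ^ 2 = ((∏ i, d i) ^ (m + 1)) ^ 2 := by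
    rw [sq]
    nth_rewrite 2 [hswap]
    exact hQQ
  rw [hsub, (sq_eq_sq_iff_abs_eq_abs _ _).mp hQ2, abs_pow]

end JacobianCongrAux

open JacobianCongrAux in
/-- Jacobian of the congruence transformation `X ↦ A X Aᵀ` on symmetric
matrices (the linear part of `Y = A X Aᵀ + C`): the absolute value of its determinant,
as a linear endomorphism of `Sym(m, ℝ)`, equals `|det A|^{m+1}`. -/
theorem jacobian_congruence_transformation (m : ℕ)
    (A : Matrix (Fin m) (Fin m) ℝ) (hA : IsUnit A.det)
    (C : Matrix (Fin m) (Fin m) ℝ) (hC : C.IsSymm)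
    (L : symSubmodule m →ₗ[ℝ] symSubmodule m)
    (hL : ∀ X : symSubmodule m, (L X : Matrix (Fin m) (Fin m) ℝ) = A * (X : Matrix (Fin m) (Fin m) ℝ) * Aᵀ) :
    |LinearMap.det L| = |A.det| ^ (m + 1) := by
  classical
  have hLA : L = congrMap m A := LinearMap.ext fun X => Subtype.ext (hL X)
  rw [hLA]
  obtain ⟨Ls, Ls', d, hdec⟩ :=
    Matrix.Pivot.exists_list_transvec_mul_diagonal_mul_list_transvec A
  have hdetT : ∀ (T : List (Matrix.TransvectionStruct (Fin m) ℝ)),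
      LinearMap.det (congrMap m ((T.map Matrix.TransvectionStruct.toMatrix).prod)) = 1 := by
    intro T
    induction T with
    | nil => simp [congrMap_one]
    | cons t tl ih =>
      rw [List.map_cons, List.prod_cons, det_congrMap_mul, ih, mul_one]
      rcases t with ⟨ti, tj, htij, tc⟩
      rw [Matrix.TransvectionStruct.toMatrix_mk]
      exact det_congrMap_transvection ti tj htij tc
  have hdA : LinearMap.det (congrMap m A) = LinearMap.det (congrMap m (Matrix.diagonal d)) := by
    rw [hdec, det_congrMap_mul, det_congrMap_mul, hdetT, hdetT, one_mul, mul_one]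
  have hdetA : A.det = (Matrix.diagonal d).det := by
    rw [hdec]
    simp [Matrix.det_mul, Matrix.TransvectionStruct.det_toMatrix_prod]
  rw [hdA, det_congrMap_diagonal, abs_prod_symIdx, hdetA, Matrix.det_diagonal]
end
end

section
/- Jacobian of scaling an upper triangular matrix by a diagonal matrix: if J = B G where B = diag(b_1,…,b_m) and G is upper triangular with unit diagonal (g_ii = 1), all real, then (dJ) = ∏_{i=1}^m |b_i|^{m-i} (dB)(dG). -/
open MeasureTheory Matrix

noncomputable section

/-- Index set for the upper-triangular entries (with diagonal). -/
abbrev UpIdx (m : ℕ) := {p : Fin m × Fin m // p.1 ≤ p.2}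

/-- Index set for the strictly upper-triangular entries. -/
abbrev SUpIdx (m : ℕ) := {p : Fin m × Fin m // p.1 < p.2}

/-- Unit upper-triangular matrix built from its strictly upper entries. -/
def unitUpperOf {m : ℕ} (u : SUpIdx m → ℝ) : Matrix (Fin m) (Fin m) ℝ :=
  Matrix.of fun i j => if i = j then 1 else if h : i < j then u ⟨(i, j), h⟩ else 0

/-- Upper-triangular coordinates of a matrix. -/
def upCoord {m : ℕ} (X : Matrix (Fin m) (Fin m) ℝ) : UpIdx m → ℝ :=
  fun p => X p.1.1 p.1.2

namespace JacAux

variable {m : ℕ}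

/-- Reassemble an upper-triangular coordinate vector from diagonal and strict parts. -/
def assemble (b : Fin m → ℝ) (u : SUpIdx m → ℝ) : UpIdx m → ℝ :=
  fun q => if h : q.1.1 < q.1.2 then u ⟨q.1, h⟩ else b q.1.1

/-- The index equivalence splitting upper indices into diagonal and strict parts. -/
def idxEquiv (m : ℕ) : (Fin m ⊕ SUpIdx m) ≃ UpIdx m where
  toFun := Sum.elim (fun i => ⟨(i, i), le_refl i⟩) (fun q => ⟨q.1, le_of_lt q.2⟩)
  invFun q := if h : q.1.1 < q.1.2 then Sum.inr ⟨q.1, h⟩ else Sum.inl q.1.1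
  left_inv s := by
    cases s with
    | inl i => simp
    | inr q => simp [q.2]
  right_inv q := by
    by_cases h : q.1.1 < q.1.2
    · simp [h]
    · have heq : q.1.1 = q.1.2 := le_antisymm q.2 (not_lt.1 h)
      simp only [h, dif_neg, not_false_iff, Sum.elim_inl]
      exact Subtype.ext (Prod.ext rfl heq)

/-- The packing measurable equivalence. -/
def packEquiv (m : ℕ) : ((Fin m → ℝ) × (SUpIdx m → ℝ)) ≃ᵐ (UpIdx m → ℝ) :=
  (MeasurableEquiv.sumPiEquivProdPi (fun _ : Fin m ⊕ SUpIdx m => ℝ)).symm.trans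
    (MeasurableEquiv.piCongrLeft (fun _ => ℝ) (idxEquiv m))

lemma packEquiv_mp : MeasurePreserving (packEquiv m) volume volume :=
  (volume_measurePreserving_piCongrLeft (fun _ => ℝ) (idxEquiv m)).comp
    (volume_measurePreserving_sumPiEquivProdPi_symm (fun _ : Fin m ⊕ SUpIdx m => ℝ))

lemma packEquiv_apply (p : (Fin m → ℝ) × (SUpIdx m → ℝ)) :
    packEquiv m p = assemble p.1 p.2 := by
  funext q
  have h1 : ∀ s : Fin m ⊕ SUpIdx m,
      packEquiv m p (idxEquiv m s) = Sum.elim p.1 p.2 s := by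
    intro s
    show Equiv.piCongrLeft (fun _ => ℝ) (idxEquiv m)
      ((Equiv.sumPiEquivProdPi (fun _ : Fin m ⊕ SUpIdx m => ℝ)).symm p) (idxEquiv m s) = _
    rw [Equiv.piCongrLeft_apply_apply]
    cases s <;> rfl
  have h2 := h1 ((idxEquiv m).symm q)
  rw [Equiv.apply_symm_apply] at h2
  rw [h2]
  show Sum.elim p.1 p.2 (if h : q.1.1 < q.1.2 then Sum.inr ⟨q.1, h⟩ else Sum.inl q.1.1) = _
  by_cases h : q.1.1 < q.1.2 <;> simp [assemble, h]

lemma assemble_scaled (b : Fin m → ℝ) (u : SUpIdx m → ℝ) :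
    assemble b (fun q => b q.1.1 * u q) = upCoord (Matrix.diagonal b * unitUpperOf u) := by
  funext q
  simp only [assemble, upCoord, Matrix.diagonal_mul]
  by_cases h : q.1.1 < q.1.2
  · have hne : q.1.1 ≠ q.1.2 := ne_of_lt h
    simp [unitUpperOf, hne, h]
  · have heq : q.1.1 = q.1.2 := le_antisymm q.2 (not_lt.1 h)
    simp [unitUpperOf, heq, h]

lemma prod_abs (b : Fin m → ℝ) :
    ∏ q : SUpIdx m, |b q.1.1| = ∏ i : Fin m, |b i| ^ (m - (i.val + 1)) := by
  classical
  rw [← Finset.prod_subtype (Finset.univ.filter fun p : Fin m × Fin m => p.1 < p.2)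
      (by simp) (fun p : Fin m × Fin m => |b p.1|)]
  rw [Finset.prod_filter, Fintype.prod_prod_type]
  refine Finset.prod_congr rfl fun i _ => ?_
  rw [← Finset.prod_filter (fun j => i < j) (fun _ => |b i|), Finset.prod_const]
  congr 1
  have : Finset.univ.filter (fun j : Fin m => i < j) = Finset.Ioi i := by
    ext j; simp
  rw [this, Fin.card_Ioi]
  omega

lemma assemble_measurable :
    Measurable fun p : (Fin m → ℝ) × (SUpIdx m → ℝ) => assemble p.1 p.2 := by
  apply measurable_pi_lambda
  intro q
  unfold assemble
  by_cases h : q.1.1 < q.1.2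
  · simp only [dif_pos h]
    exact (measurable_pi_apply _).comp measurable_snd
  · simp only [dif_neg h]
    exact (measurable_pi_apply _).comp measurable_fst

/-- Change of variables for the diagonal scaling on the strict-upper coordinates. -/
lemma inner_cov (b : Fin m → ℝ) (hb : ∀ i, b i ≠ 0) (F : (SUpIdx m → ℝ) → ENNReal)
    (hF : Measurable F) :
    ∫⁻ u : SUpIdx m → ℝ, F u =
      ∫⁻ u : SUpIdx m → ℝ,
        F (fun q => b q.1.1 * u q) * ENNReal.ofReal (∏ q : SUpIdx m, |b q.1.1|) := by
  classical
  set c : SUpIdx m → ℝ := fun q => b q.1.1 with hc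
  set f : (SUpIdx m → ℝ) →ₗ[ℝ] (SUpIdx m → ℝ) := Matrix.toLin' (Matrix.diagonal c) with hf
  have hdet : LinearMap.det f = ∏ q, c q := by
    rw [hf, LinearMap.det_toLin', Matrix.det_diagonal]
  have hdet0 : LinearMap.det f ≠ 0 := by
    rw [hdet]; exact Finset.prod_ne_zero_iff.2 fun q _ => hb q.1.1
  have happly : ∀ u, f u = fun q => c q * u q := by
    intro u; funext q
    simp [hf, Matrix.toLin'_apply, Matrix.mulVec_diagonal]
  have hmap := Real.map_linearMap_volume_pi_eq_smul_volume_pi hdet0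
  rw [abs_inv] at hmap
  have hfm : Measurable f := f.continuous_of_finiteDimensional.measurable
  have key : ∫⁻ u, F (f u) =
      ENNReal.ofReal |LinearMap.det f|⁻¹ * ∫⁻ x, F x := by
    rw [← lintegral_map hF hfm, hmap, lintegral_smul_measure, smul_eq_mul]
  have habs : (0:ℝ) < |LinearMap.det f| := abs_pos.2 hdet0
  have hprod : ∏ q : SUpIdx m, |b q.1.1| = |LinearMap.det f| := by
    rw [hdet, Finset.abs_prod]
  have heq : (fun u : SUpIdx m → ℝ => F fun q => b q.1.1 * u q) = fun u => F (f u) := by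
    funext u; rw [happly u]
  have hFs : Measurable fun u : SUpIdx m → ℝ => F fun q => b q.1.1 * u q := by
    rw [heq]; exact hF.comp hfm
  rw [hprod, lintegral_mul_const _ hFs, heq, key, mul_comm, ← mul_assoc,
    ← ENNReal.ofReal_mul habs.le, mul_inv_cancel₀ habs.ne', ENNReal.ofReal_one, one_mul]

end JacAux

open JacAux in
/-- Jacobian of the factorisation `J = B G` of an upper-triangular matrix
into a diagonal matrix `B = diag(b_1,…,b_m)` times a unit upper-triangular `G`:
for every measurable `g`,
`∫ g(J) (dJ) = ∫ g(BG) ∏_{i=1}^m |b_i|^{m-i} (dB)(dG)`,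
each side with Lebesgue measure on the corresponding independent entries. -/
theorem jacobian_diagonal_times_unit_upper (m : ℕ)
    (g : (UpIdx m → ℝ) → ENNReal) (hg : Measurable g) :
    (∫⁻ u : UpIdx m → ℝ, g u) =
      ∫⁻ p : (Fin m → ℝ) × (SUpIdx m → ℝ),
        g (upCoord (Matrix.diagonal p.1 * unitUpperOf p.2)) *
          ENNReal.ofReal (∏ i : Fin m, |p.1 i| ^ (m - (i.val + 1))) := by
  classical
  have hA : Measurable fun p : (Fin m → ℝ) × (SUpIdx m → ℝ) => g (assemble p.1 p.2) :=
    hg.comp assemble_measurable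
  have hscale : Measurable fun p : (Fin m → ℝ) × (SUpIdx m → ℝ) =>
      (fun q : SUpIdx m => p.1 q.1.1 * p.2 q) := by
    apply measurable_pi_lambda
    intro q
    exact ((measurable_pi_apply _).comp measurable_fst).mul
      ((measurable_pi_apply _).comp measurable_snd)
  have hB : Measurable fun p : (Fin m → ℝ) × (SUpIdx m → ℝ) =>
      g (upCoord (Matrix.diagonal p.1 * unitUpperOf p.2)) *
        ENNReal.ofReal (∏ i : Fin m, |p.1 i| ^ (m - (i.val + 1))) := by
    have h1 : Measurable fun p : (Fin m → ℝ) × (SUpIdx m → ℝ) =>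
        upCoord (Matrix.diagonal p.1 * unitUpperOf p.2) := by
      have : (fun p : (Fin m → ℝ) × (SUpIdx m → ℝ) =>
          upCoord (Matrix.diagonal p.1 * unitUpperOf p.2)) =
          fun p => assemble p.1 (fun q => p.1 q.1.1 * p.2 q) := by
        funext p; rw [assemble_scaled]
      rw [this]
      exact assemble_measurable.comp (measurable_fst.prodMk hscale)
    refine (hg.comp h1).mul (ENNReal.measurable_ofReal.comp ?_)
    exact Finset.measurable_prod _ fun i _ =>
      (((measurable_pi_apply i).comp measurable_fst).abs.pow_const _)
  calc (∫⁻ u : UpIdx m → ℝ, g u)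
      = ∫⁻ p : (Fin m → ℝ) × (SUpIdx m → ℝ), g (assemble p.1 p.2) := by
        rw [← packEquiv_mp.lintegral_comp hg]
        simp_rw [packEquiv_apply]
    _ = ∫⁻ b : Fin m → ℝ, ∫⁻ u : SUpIdx m → ℝ, g (assemble b u) := by
        rw [Measure.volume_eq_prod, lintegral_prod _ hA.aemeasurable]
    _ = ∫⁻ b : Fin m → ℝ, ∫⁻ u : SUpIdx m → ℝ,
          g (upCoord (Matrix.diagonal b * unitUpperOf u)) *
            ENNReal.ofReal (∏ i : Fin m, |b i| ^ (m - (i.val + 1))) := by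
        have hae : ∀ᵐ b : Fin m → ℝ, ∀ i, b i ≠ (0:ℝ) := by
          rw [MeasureTheory.volume_pi]
          exact ae_all_iff.2 fun i => Measure.ae_eval_ne _ i 0
        refine lintegral_congr_ae ?_
        filter_upwards [hae] with b hb
        have hFb : Measurable fun u : SUpIdx m → ℝ => g (assemble b u) :=
          hg.comp (assemble_measurable.comp (measurable_const.prodMk measurable_id))
        have := inner_cov b hb (fun u => g (assemble b u)) hFb
        rw [this]
        refine lintegral_congr fun u => ?_
        simp only [assemble_scaled, prod_abs]
    _ = ∫⁻ p : (Fin m → ℝ) × (SUpIdx m → ℝ),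
          g (upCoord (Matrix.diagonal p.1 * unitUpperOf p.2)) *
            ENNReal.ofReal (∏ i : Fin m, |p.1 i| ^ (m - (i.val + 1))) := by
        rw [Measure.volume_eq_prod, lintegral_prod _ hB.aemeasurable]
end
end

section
/- Jacobian of the matrix square root on positive definite matrices: if S = R² with S, R real symmetric positive definite m×m matrices, and R has eigenvalues d_1 > ⋯ > d_m > 0, then (dS) = 2^m (det R) ∏_{i<j} (d_i + d_j) (dR); equivalently, the absolute determinant of the derivative of R ↦ R² on Sym(m,ℝ) at R equals ∏_{i ≤ j} (d_i + d_j). -/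
open Matrix

noncomputable section

namespace JacAux

variable {m : ℕ}

/-- Index type for the standard basis of symmetric matrices. -/
abbrev SymIdx (m : ℕ) := {p : Fin m × Fin m // p.1 ≤ p.2}

/-- Coordinate map on symmetric matrices. -/
def coordFun (m : ℕ) : symSubmodule m →ₗ[ℝ] (SymIdx m → ℝ) where
  toFun X := fun p => (X : Matrix (Fin m) (Fin m) ℝ) p.1.1 p.1.2
  map_add' X Y := rfl
  map_smul' c X := rfl

/-- Build a symmetric matrix from coordinates. -/
def fromFun (f : SymIdx m → ℝ) : Matrix (Fin m) (Fin m) ℝ :=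
  Matrix.of fun i j =>
    if h : i ≤ j then f ⟨(i, j), h⟩ else f ⟨(j, i), le_of_not_ge h⟩

lemma fromFun_symm_apply (f : SymIdx m → ℝ) (i j : Fin m) :
    fromFun f j i = fromFun f i j := by
  unfold fromFun
  rcases le_or_gt i j with h | h
  · rcases eq_or_lt_of_le h with rfl | h'
    · rfl
    · simp only [Matrix.of_apply]
      rw [dif_neg (not_le_of_gt h'), dif_pos h]
  · simp only [Matrix.of_apply]
    rw [dif_pos h.le, dif_neg (not_le_of_gt h)]

lemma fromFun_isSymm (f : SymIdx m → ℝ) : (fromFun f).IsSymm := by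
  show (fromFun f)ᵀ = fromFun f
  ext i j
  rw [Matrix.transpose_apply]
  exact fromFun_symm_apply f i j

/-- The linear equivalence between symmetric matrices and coordinates. -/
def symEquivFun (m : ℕ) : symSubmodule m ≃ₗ[ℝ] (SymIdx m → ℝ) :=
  { coordFun m with
    invFun := fun f => ⟨fromFun f, fromFun_isSymm f⟩
    left_inv := by
      intro X
      apply Subtype.ext
      ext i j
      show fromFun (coordFun m X) i j = (X : Matrix (Fin m) (Fin m) ℝ) i j
      unfold fromFun
      rcases le_or_gt i j with h | h
      · simp only [Matrix.of_apply]
        rw [dif_pos h]; rfl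
      · simp only [Matrix.of_apply]
        rw [dif_neg (not_le_of_gt h)]
        show (X : Matrix (Fin m) (Fin m) ℝ) j i = _
        have hs : (X : Matrix (Fin m) (Fin m) ℝ).IsSymm := X.2
        conv_rhs => rw [← hs]
        rfl
    right_inv := by
      intro f
      funext p
      show fromFun f p.1.1 p.1.2 = f p
      unfold fromFun
      simp only [Matrix.of_apply]
      rw [dif_pos p.2] }

/-- Basis of symmetric matrices. -/
def symBasis (m : ℕ) : Module.Basis (SymIdx m) ℝ (symSubmodule m) :=
  Module.Basis.ofEquivFun (symEquivFun m)

/-- The map `H ↦ AH + HA` on symmetric matrices, for `A` symmetric. -/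
def symMul (A : Matrix (Fin m) (Fin m) ℝ) (hA : A.IsSymm) :
    symSubmodule m →ₗ[ℝ] symSubmodule m where
  toFun H := ⟨A * (H : Matrix (Fin m) (Fin m) ℝ) + (H : Matrix (Fin m) (Fin m) ℝ) * A, by
    show (A * (H : Matrix (Fin m) (Fin m) ℝ) + (H : Matrix (Fin m) (Fin m) ℝ) * A)ᵀ = _
    have hH : ((H : Matrix (Fin m) (Fin m) ℝ))ᵀ = (H : Matrix (Fin m) (Fin m) ℝ) := H.2
    rw [Matrix.transpose_add, Matrix.transpose_mul, Matrix.transpose_mul, hH, hA.eq, add_comm]⟩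
  map_add' X Y := by
    apply Subtype.ext
    show A * ((X : Matrix (Fin m) (Fin m) ℝ) + Y) + ((X : Matrix (Fin m) (Fin m) ℝ) + Y) * A = _
    simp only [Matrix.mul_add, Matrix.add_mul]
    show _ = A * (X : Matrix (Fin m) (Fin m) ℝ) + X * A + (A * (Y : Matrix (Fin m) (Fin m) ℝ) + Y * A)
    exact add_add_add_comm _ _ _ _
  map_smul' c X := by
    apply Subtype.ext
    show A * (c • (X : Matrix (Fin m) (Fin m) ℝ)) + (c • (X : Matrix (Fin m) (Fin m) ℝ)) * A = _
    show _ = c • (A * (X : Matrix (Fin m) (Fin m) ℝ) + X * A)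
    rw [Matrix.mul_smul, Matrix.smul_mul, smul_add]

/-- Conjugation `H ↦ VᵀHV` on symmetric matrices. -/
def congrMap (V : Matrix (Fin m) (Fin m) ℝ) :
    symSubmodule m →ₗ[ℝ] symSubmodule m where
  toFun H := ⟨Vᵀ * (H : Matrix (Fin m) (Fin m) ℝ) * V, by
    show (Vᵀ * (H : Matrix (Fin m) (Fin m) ℝ) * V)ᵀ = _
    have hH : ((H : Matrix (Fin m) (Fin m) ℝ))ᵀ = (H : Matrix (Fin m) (Fin m) ℝ) := H.2
    rw [Matrix.transpose_mul, Matrix.transpose_mul, Matrix.transpose_transpose, hH,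
      Matrix.mul_assoc]⟩
  map_add' X Y := by
    apply Subtype.ext
    show Vᵀ * ((X : Matrix (Fin m) (Fin m) ℝ) + Y) * V = _
    show _ = Vᵀ * (X : Matrix (Fin m) (Fin m) ℝ) * V + Vᵀ * (Y : Matrix (Fin m) (Fin m) ℝ) * V
    rw [Matrix.mul_add, Matrix.add_mul]
  map_smul' c X := by
    apply Subtype.ext
    show Vᵀ * (c • (X : Matrix (Fin m) (Fin m) ℝ)) * V = _
    show _ = c • (Vᵀ * (X : Matrix (Fin m) (Fin m) ℝ) * V)
    rw [Matrix.mul_smul, Matrix.smul_mul]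

/-- Conjugation by an orthogonal matrix is a linear equivalence on symmetric matrices. -/
def conjEquiv (U : Matrix (Fin m) (Fin m) ℝ) (h1 : Uᵀ * U = 1) (h2 : U * Uᵀ = 1) :
    symSubmodule m ≃ₗ[ℝ] symSubmodule m :=
  LinearEquiv.ofLinear (congrMap U) (congrMap Uᵀ)
    (by
      apply LinearMap.ext; intro H
      apply Subtype.ext
      show Uᵀ * ((Uᵀ)ᵀ * (H : Matrix (Fin m) (Fin m) ℝ) * Uᵀ) * U = (H : Matrix (Fin m) (Fin m) ℝ)
      rw [Matrix.transpose_transpose]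
      calc Uᵀ * (U * (H : Matrix (Fin m) (Fin m) ℝ) * Uᵀ) * U
          = (Uᵀ * U) * (H : Matrix (Fin m) (Fin m) ℝ) * (Uᵀ * U) := by
            simp only [Matrix.mul_assoc]
        _ = (H : Matrix (Fin m) (Fin m) ℝ) := by rw [h1, one_mul, mul_one])
    (by
      apply LinearMap.ext; intro H
      apply Subtype.ext
      show (Uᵀ)ᵀ * (Uᵀ * (H : Matrix (Fin m) (Fin m) ℝ) * U) * Uᵀ = (H : Matrix (Fin m) (Fin m) ℝ)
      rw [Matrix.transpose_transpose]
      calc U * (Uᵀ * (H : Matrix (Fin m) (Fin m) ℝ) * U) * Uᵀ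
          = (U * Uᵀ) * (H : Matrix (Fin m) (Fin m) ℝ) * (U * Uᵀ) := by
            simp only [Matrix.mul_assoc]
        _ = (H : Matrix (Fin m) (Fin m) ℝ) := by rw [h2, one_mul, mul_one])

lemma toMatrix_symMul_diagonal (d : Fin m → ℝ) :
    LinearMap.toMatrix (symBasis m) (symBasis m)
      (symMul (Matrix.diagonal d) (Matrix.isSymm_diagonal d)) =
    Matrix.diagonal (fun p : SymIdx m => d p.1.1 + d p.1.2) := by
  ext p q
  rw [LinearMap.toMatrix_apply]
  rw [symBasis, Module.Basis.ofEquivFun_repr_apply, Module.Basis.coe_ofEquivFun]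
  show (Matrix.diagonal d * (fromFun (Pi.single q 1) : Matrix (Fin m) (Fin m) ℝ)
      + fromFun (Pi.single q 1) * Matrix.diagonal d) p.1.1 p.1.2 = _
  rw [Matrix.add_apply, Matrix.diagonal_mul, Matrix.mul_diagonal]
  have hval : fromFun (Pi.single q 1) p.1.1 p.1.2 = if p = q then 1 else 0 := by
    unfold fromFun
    simp only [Matrix.of_apply]
    rw [dif_pos p.2]
    have : (⟨(p.1.1, p.1.2), p.2⟩ : SymIdx m) = p := rfl
    rw [this, Pi.single_apply]
  rw [hval]
  by_cases hpq : p = q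
  · subst hpq
    simp [Matrix.diagonal_apply_eq]
  · simp [hpq, Matrix.diagonal_apply_ne _ hpq]

lemma prod_symIdx (d : Fin m → ℝ) :
    ∏ p : SymIdx m, (d p.1.1 + d p.1.2) =
      ∏ i : Fin m, ∏ j ∈ Finset.Ici i, (d i + d j) := by
  rw [← Finset.prod_subtype (Finset.univ.filter fun p : Fin m × Fin m => p.1 ≤ p.2)
      (by simp) (fun p : Fin m × Fin m => d p.1 + d p.2)]
  rw [Finset.prod_filter, Fintype.prod_prod_type]
  refine Finset.prod_congr rfl fun i _ => ?_
  have : Finset.Ici i = Finset.univ.filter (fun j => i ≤ j) := by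
    ext j; simp
  rw [this, Finset.prod_filter]

end JacAux

open JacAux in
/-- Jacobian of the matrix square root `R ↦ S = R²` on positive definite
matrices. -/
theorem jacobian_matrix_square_root (m : ℕ)
    (R : Matrix (Fin m) (Fin m) ℝ) (hR : R.IsHermitian) (hRpd : R.PosDef)
    (L : symSubmodule m →ₗ[ℝ] symSubmodule m)
    (hL : ∀ H : symSubmodule m, (L H : Matrix (Fin m) (Fin m) ℝ) =
      R * (H : Matrix (Fin m) (Fin m) ℝ) + (H : Matrix (Fin m) (Fin m) ℝ) * R) :
    LinearMap.det L =
      ∏ i : Fin m, ∏ j ∈ Finset.Ici i, (hR.eigenvalues i + hR.eigenvalues j) := by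
  classical
  set d : Fin m → ℝ := hR.eigenvalues with hd
  set U : Matrix (Fin m) (Fin m) ℝ := (hR.eigenvectorUnitary : Matrix (Fin m) (Fin m) ℝ) with hU
  have hUmem := hR.eigenvectorUnitary.2
  rw [Matrix.mem_unitaryGroup_iff'] at hUmem
  have hstar : star U = Uᵀ := by
    rw [Matrix.star_eq_conjTranspose, Matrix.conjTranspose_eq_transpose_of_trivial]
  have h1 : Uᵀ * U = 1 := by rw [← hstar]; exact hUmem
  have h2 : U * Uᵀ = 1 := by
    rw [← hstar]
    have := hR.eigenvectorUnitary.2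
    rw [Matrix.mem_unitaryGroup_iff] at this
    exact this
  have hspec : R = U * Matrix.diagonal d * Uᵀ := by
    conv_lhs => rw [hR.spectral_theorem]
    simp only [Unitary.conjStarAlgAut_apply, Unitary.coe_star]
    rw [hstar]
    congr 1
  have hDR : Uᵀ * R * U = Matrix.diagonal d := by
    rw [hspec]
    calc Uᵀ * (U * Matrix.diagonal d * Uᵀ) * U
        = (Uᵀ * U) * Matrix.diagonal d * (Uᵀ * U) := by simp only [Matrix.mul_assoc]
      _ = Matrix.diagonal d := by rw [h1, one_mul, mul_one]
  set e := conjEquiv U h1 h2 with he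
  have hconj : (e : symSubmodule m →ₗ[ℝ] symSubmodule m) ∘ₗ L ∘ₗ
      (e.symm : symSubmodule m →ₗ[ℝ] symSubmodule m) =
      symMul (Matrix.diagonal d) (Matrix.isSymm_diagonal d) := by
    apply LinearMap.ext; intro H
    apply Subtype.ext
    have hsymm : (e.symm H : Matrix (Fin m) (Fin m) ℝ) =
        U * (H : Matrix (Fin m) (Fin m) ℝ) * Uᵀ := by
      show ((Uᵀ)ᵀ * (H : Matrix (Fin m) (Fin m) ℝ) * Uᵀ) = _
      rw [Matrix.transpose_transpose]
    show Uᵀ * (L (e.symm H) : Matrix (Fin m) (Fin m) ℝ) * U = _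
    rw [hL, hsymm]
    show _ = Matrix.diagonal d * (H : Matrix (Fin m) (Fin m) ℝ)
        + (H : Matrix (Fin m) (Fin m) ℝ) * Matrix.diagonal d
    rw [Matrix.mul_add, Matrix.add_mul]
    congr 1
    · calc Uᵀ * (R * (U * (H : Matrix (Fin m) (Fin m) ℝ) * Uᵀ)) * U
          = (Uᵀ * R * U) * (H : Matrix (Fin m) (Fin m) ℝ) * (Uᵀ * U) := by
            simp only [Matrix.mul_assoc]
        _ = Matrix.diagonal d * (H : Matrix (Fin m) (Fin m) ℝ) := by
            rw [hDR, h1, mul_one]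
    · calc Uᵀ * (U * (H : Matrix (Fin m) (Fin m) ℝ) * Uᵀ * R) * U
          = (Uᵀ * U) * (H : Matrix (Fin m) (Fin m) ℝ) * (Uᵀ * R * U) := by
            simp only [Matrix.mul_assoc]
        _ = (H : Matrix (Fin m) (Fin m) ℝ) * Matrix.diagonal d := by
            rw [hDR, h1, one_mul]
  have hdet : LinearMap.det L =
      LinearMap.det (symMul (Matrix.diagonal d) (Matrix.isSymm_diagonal d)) := by
    rw [← hconj, LinearMap.det_conj]
  rw [hdet, ← LinearMap.det_toMatrix (symBasis m), toMatrix_symMul_diagonal,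
    Matrix.det_diagonal, prod_symIdx]
end
end

section
/- Jacobian of the beta I–II change of variables: under the transformation S = (I_m − B)^{-1} − I_m = (I_m − B)^{-1} B between symmetric matrices with 0 < B < I and S positive definite, the Lebesgue measures satisfy (dS) = det(I_m − B)^{-(m+1)} (dB). -/
open Matrix

noncomputable section

def symEquiv (m : ℕ) :
    symSubmodule m ≃ₗ[ℝ] ({p : Fin m × Fin m // p.1 ≤ p.2} → ℝ) where
  toFun H := fun p => (H : Matrix (Fin m) (Fin m) ℝ) p.1.1 p.1.2
  map_add' := fun a b => rfl
  map_smul' := fun c a => rfl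
  invFun f := ⟨Matrix.of fun i j =>
      if h : i ≤ j then f ⟨(i, j), h⟩ else f ⟨(j, i), le_of_not_ge h⟩, by
    show Matrix.IsSymm _
    unfold Matrix.IsSymm
    ext i j
    simp only [Matrix.transpose_apply, Matrix.of_apply]
    rcases le_total i j with h | h
    · rcases le_or_gt j i with h' | h'
      · have : i = j := le_antisymm h h'
        subst this; rfl
      · rw [dif_neg (not_le.2 h'), dif_pos h]
    · rcases le_or_gt i j with h' | h'
      · have : i = j := le_antisymm h' h
        subst this; rfl
      · rw [dif_pos h, dif_neg (not_le.2 h')]⟩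
  left_inv := by
    intro H
    apply Subtype.ext
    have hs : (H : Matrix (Fin m) (Fin m) ℝ)ᵀ = H := H.2
    ext i j
    simp only [Matrix.of_apply]
    split_ifs with h
    · rfl
    · conv_rhs => rw [← hs]
      rfl
  right_inv := by
    intro f
    funext p
    simp only [Matrix.of_apply]
    rw [dif_pos p.2]

def congrMap (m : ℕ) (A : Matrix (Fin m) (Fin m) ℝ) :
    symSubmodule m →ₗ[ℝ] symSubmodule m where
  toFun H := ⟨A * (H : Matrix (Fin m) (Fin m) ℝ) * Aᵀ, by
    have hs : (H : Matrix (Fin m) (Fin m) ℝ)ᵀ = H := H.2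
    show Matrix.IsSymm _
    unfold Matrix.IsSymm
    rw [Matrix.transpose_mul, Matrix.transpose_mul, Matrix.transpose_transpose, hs,
      Matrix.mul_assoc]⟩
  map_add' := fun a b => by
    apply Subtype.ext
    simp [Matrix.mul_add, Matrix.add_mul]
  map_smul' := fun c a => by
    apply Subtype.ext
    simp [Matrix.mul_smul, Matrix.smul_mul]

lemma congrMap_mul (m : ℕ) (A C : Matrix (Fin m) (Fin m) ℝ) :
    congrMap m (A * C) = (congrMap m A).comp (congrMap m C) := by
  apply LinearMap.ext; intro H
  apply Subtype.ext
  show (A * C) * (H : Matrix (Fin m) (Fin m) ℝ) * (A * C)ᵀ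
      = A * (C * (H : Matrix (Fin m) (Fin m) ℝ) * Cᵀ) * Aᵀ
  rw [Matrix.transpose_mul]
  noncomm_ring

lemma congrMap_one (m : ℕ) : congrMap m 1 = LinearMap.id := by
  apply LinearMap.ext; intro H
  apply Subtype.ext
  show (1 : Matrix (Fin m) (Fin m) ℝ) * (H : Matrix (Fin m) (Fin m) ℝ) * (1 : Matrix (Fin m) (Fin m) ℝ)ᵀ = H
  simp

lemma det_congrMap_diagonal (m : ℕ) (d : Fin m → ℝ) :
    LinearMap.det (congrMap m (Matrix.diagonal d)) =
      ∏ p : {p : Fin m × Fin m // p.1 ≤ p.2}, d p.1.1 * d p.1.2 := by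
  set b := Module.Basis.ofEquivFun (symEquiv m) with hb
  rw [← LinearMap.det_toMatrix b]
  have key : LinearMap.toMatrix b b (congrMap m (Matrix.diagonal d)) =
      Matrix.diagonal (fun p : {p : Fin m × Fin m // p.1 ≤ p.2} => d p.1.1 * d p.1.2) := by
    ext k l
    rw [LinearMap.toMatrix_apply]
    have h1 : b.repr ((congrMap m (Matrix.diagonal d)) (b l)) k
        = (symEquiv m) ((congrMap m (Matrix.diagonal d)) (b l)) k := by
      rw [hb, Module.Basis.ofEquivFun_repr_apply]
    rw [h1]
    have h2 : ∀ H : symSubmodule m, (symEquiv m) ((congrMap m (Matrix.diagonal d)) H) k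
        = d k.1.1 * d k.1.2 * (symEquiv m) H k := by
      intro H
      show (Matrix.diagonal d * (H : Matrix (Fin m) (Fin m) ℝ) * (Matrix.diagonal d)ᵀ) k.1.1 k.1.2
          = d k.1.1 * d k.1.2 * (H : Matrix (Fin m) (Fin m) ℝ) k.1.1 k.1.2
      rw [Matrix.diagonal_transpose, Matrix.mul_diagonal, Matrix.diagonal_mul]
      ring
    rw [h2]
    have h3 : (symEquiv m) (b l) = Function.update (0 : {p : Fin m × Fin m // p.1 ≤ p.2} → ℝ) l 1 := by
      rw [hb, Module.Basis.coe_ofEquivFun]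
      exact LinearEquiv.apply_symm_apply _ _
    rw [h3, Function.update_apply, Matrix.diagonal_apply]
    by_cases h : k = l
    · subst h; simp
    · simp [h]
  rw [key, Matrix.det_diagonal]

lemma prod_pairs (m : ℕ) (d : Fin m → ℝ) (hd : ∀ i, 0 < d i) :
    (∏ p : {p : Fin m × Fin m // p.1 ≤ p.2}, d p.1.1 * d p.1.2) = (∏ i, d i) ^ (m + 1) := by
  classical
  set f : Fin m × Fin m → ℝ := fun p => d p.1 * d p.2 with hf
  have hP : (∏ p : {p : Fin m × Fin m // p.1 ≤ p.2}, d p.1.1 * d p.1.2)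
      = ∏ p ∈ Finset.univ.filter (fun p : Fin m × Fin m => p.1 ≤ p.2), f p :=
    (Finset.prod_subtype _ (by simp) f).symm
  set P := ∏ p ∈ Finset.univ.filter (fun p : Fin m × Fin m => p.1 ≤ p.2), f p with hPdef
  set Q := ∏ p ∈ Finset.univ.filter (fun p : Fin m × Fin m => p.2 ≤ p.1), f p with hQdef
  have hPQ : P = Q := by
    refine Finset.prod_nbij' Prod.swap Prod.swap ?_ ?_ ?_ ?_ ?_
    · intro a ha; simp only [Finset.mem_filter, Finset.mem_univ, true_and] at ha ⊢
      exact ha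
    · intro a ha; simp only [Finset.mem_filter, Finset.mem_univ, true_and] at ha ⊢
      exact ha
    · intro a _; rfl
    · intro a _; rfl
    · intro a _; simp [hf, mul_comm]
  have hsplit : P * (∏ p ∈ Finset.univ.filter (fun p : Fin m × Fin m => ¬ p.1 ≤ p.2), f p)
      = ∏ p : Fin m × Fin m, f p :=
    Finset.prod_filter_mul_prod_filter_not Finset.univ _ f
  have hQsplit : Q = (∏ i, d i * d i) *
      (∏ p ∈ Finset.univ.filter (fun p : Fin m × Fin m => ¬ p.1 ≤ p.2), f p) := by
    have h1 : (Finset.univ.filter (fun p : Fin m × Fin m => p.2 ≤ p.1)).filter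
        (fun p => p.1 ≤ p.2) = Finset.univ.filter (fun p : Fin m × Fin m => p.1 = p.2) := by
      ext p
      simp only [Finset.mem_filter, Finset.mem_univ, true_and]
      constructor
      · rintro ⟨h1, h2⟩; exact le_antisymm h2 h1
      · rintro h; exact ⟨le_of_eq h.symm, le_of_eq h⟩
    have h2 : (Finset.univ.filter (fun p : Fin m × Fin m => p.2 ≤ p.1)).filter
        (fun p => ¬ p.1 ≤ p.2) = Finset.univ.filter (fun p : Fin m × Fin m => ¬ p.1 ≤ p.2) := by
      ext p
      simp only [Finset.mem_filter, Finset.mem_univ, true_and]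
      exact ⟨fun h => h.2, fun h => ⟨le_of_not_ge h, h⟩⟩
    have := Finset.prod_filter_mul_prod_filter_not
      (Finset.univ.filter (fun p : Fin m × Fin m => p.2 ≤ p.1)) (fun p => p.1 ≤ p.2) f
    rw [h1, h2] at this
    rw [hQdef, ← this]
    congr 1
    symm
    refine Finset.prod_nbij' (fun i => (i, i)) (fun p => p.1) ?_ ?_ ?_ ?_ ?_
    · intro a _; simp
    · intro p _; simp
    · intro a _; rfl
    · intro p hp; simp only [Finset.mem_filter, Finset.mem_univ, true_and] at hp
      simp [Prod.ext_iff, hp]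
    · intro a _; simp [hf]
  have hT : (∏ p : Fin m × Fin m, f p) = (∏ i, d i) ^ m * (∏ i, d i) ^ m := by
    rw [Fintype.prod_prod_type]
    simp only [hf]
    have hrow : ∀ x : Fin m, (∏ y : Fin m, d x * d y) = d x ^ m * ∏ i, d i := by
      intro x
      rw [Finset.prod_mul_distrib, Finset.prod_const, Finset.card_univ, Fintype.card_fin]
    simp only [hrow]
    rw [Finset.prod_mul_distrib, Finset.prod_pow, Finset.prod_const, Finset.card_univ,
      Fintype.card_fin]
  have hsq : P * P = ((∏ i, d i) ^ (m + 1)) * ((∏ i, d i) ^ (m + 1)) := by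
    calc P * P = P * Q := by rw [hPQ]
    _ = (∏ i, d i * d i) * (P * (∏ p ∈ Finset.univ.filter (fun p : Fin m × Fin m => ¬ p.1 ≤ p.2), f p)) := by
        rw [hQsplit]; ring
    _ = (∏ i, d i * d i) * ((∏ i, d i) ^ m * (∏ i, d i) ^ m) := by rw [hsplit, hT]
    _ = ((∏ i, d i) ^ (m + 1)) * ((∏ i, d i) ^ (m + 1)) := by
        rw [Finset.prod_mul_distrib]; ring
  have hPpos : 0 < P := by
    apply Finset.prod_pos
    intro p _
    exact mul_pos (hd _) (hd _)
  have hRpos : 0 < (∏ i, d i) ^ (m + 1) := pow_pos (Finset.prod_pos (fun i _ => hd i)) _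
  rw [hP]
  rcases mul_self_eq_mul_self_iff.mp hsq with h | h
  · exact h
  · exfalso; rw [h] at hPpos; linarith

/-- Jacobian of the beta I–II change of variables
`B ↦ S = (I - B)⁻¹ - I` on symmetric matrices with `0 < B < I`: the derivative of this
map at `B` is `H ↦ (I-B)⁻¹ H (I-B)⁻¹`, and the absolute value of its determinant on
`Sym(m, ℝ)` equals `det(I - B)^{-(m+1)}`, i.e. `(dS) = det(I-B)^{-(m+1)} (dB)`. -/
theorem jacobian_beta_I_II (m : ℕ) (B : Matrix (Fin m) (Fin m) ℝ)
    (hB : B.PosDef) (h1B : (1 - B).PosDef)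
    (L : symSubmodule m →ₗ[ℝ] symSubmodule m)
    (hL : ∀ H : symSubmodule m, (L H : Matrix (Fin m) (Fin m) ℝ) =
      (1 - B)⁻¹ * (H : Matrix (Fin m) (Fin m) ℝ) * (1 - B)⁻¹) :
    |LinearMap.det L| = ((1 - B).det)⁻¹ ^ (m + 1) := by
  classical
  set A := (1 - B)⁻¹ with hAdef
  have hA : A.PosDef := h1B.inv
  have hH : A.IsHermitian := hA.1
  have hAt : Aᵀ = A := by
    have h := hH
    unfold Matrix.IsHermitian at h
    rwa [Matrix.conjTranspose_eq_transpose_of_trivial] at h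
  have hLc : L = congrMap m A := by
    apply LinearMap.ext; intro H; apply Subtype.ext
    rw [hL H]
    show A * (H : Matrix (Fin m) (Fin m) ℝ) * A = A * (H : Matrix (Fin m) (Fin m) ℝ) * Aᵀ
    rw [hAt]
  set U : Matrix (Fin m) (Fin m) ℝ := (Matrix.IsHermitian.eigenvectorUnitary hH : Matrix (Fin m) (Fin m) ℝ) with hU
  have hstar : star U = Uᵀ := by
    rw [Matrix.star_eq_conjTranspose, Matrix.conjTranspose_eq_transpose_of_trivial]
  have hspec : A = U * Matrix.diagonal hH.eigenvalues * Uᵀ := by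
    have h := hH.spectral_theorem
    rw [Unitary.conjStarAlgAut_apply, ← hU, hstar] at h
    simpa using h
  have hUU : U * Uᵀ = 1 := by
    rw [← hstar]
    exact (Matrix.mem_unitaryGroup_iff).mp (Matrix.IsHermitian.eigenvectorUnitary hH).2
  have hDet : (∏ i, hH.eigenvalues i) = A.det := by
    rw [hH.det_eq_prod_eigenvalues]
    norm_num
  have hApos : 0 < A.det := hA.det_pos
  have detL : LinearMap.det L = (A.det) ^ (m + 1) := by
    rw [hLc]
    conv_lhs => rw [hspec]
    rw [congrMap_mul, congrMap_mul, LinearMap.det_comp, LinearMap.det_comp]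
    have h1 : LinearMap.det (congrMap m U) * LinearMap.det (congrMap m Uᵀ) = 1 := by
      rw [← LinearMap.det_comp, ← congrMap_mul, hUU, congrMap_one, LinearMap.det_id]
    rw [det_congrMap_diagonal, prod_pairs m _ (fun i => hA.eigenvalues_pos i), hDet]
    calc LinearMap.det (congrMap m U) * A.det ^ (m + 1) * LinearMap.det (congrMap m Uᵀ)
        = A.det ^ (m + 1) * (LinearMap.det (congrMap m U) * LinearMap.det (congrMap m Uᵀ)) := by
          ring
      _ = A.det ^ (m + 1) := by rw [h1, mul_one]
  rw [detL, abs_of_pos (pow_pos hApos _), hAdef, Matrix.det_nonsing_inv,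
    Ring.inverse_eq_inv']
end
end
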